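/- Fix ω ∈ [0,1] and B > 0, and set c_B = σ(2B)(1 − σ(2B)). Then for all a, b ∈ [−2B, 2B], g_ω(b) − g_ω(a) ≥ (σ(a) − ω)(b − a) + (c_B/2)(b − a)². In particular g_ω is c_B-strongly convex on [−2B, 2B], its derivative is g_ω'(a) = σ(a) − ω, and its second derivative is σ(a)(1 − σ(a)) ≥ c_B on this interval. -/

import Mathlib

noncomputable def sigmoid (t : ℝ) : ℝ := 1 / (1 + Real.exp (-t))

noncomputable def gLoss (ω a : ℝ) : ℝ :=
  -ω * Real.log (sigmoid a) - (1 - ω) * Real.log (1 - sigmoid a)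

lemma sig_pos (t : ℝ) : 0 < sigmoid t := by
  unfold sigmoid; positivity

lemma sig_lt_one (t : ℝ) : sigmoid t < 1 := by
  unfold sigmoid
  rw [div_lt_one (by positivity)]
  linarith [Real.exp_pos (-t)]

lemma hasDerivAt_sigmoid (t : ℝ) :
    HasDerivAt sigmoid (sigmoid t * (1 - sigmoid t)) t := by
  have h1 : HasDerivAt (fun t : ℝ => 1 + Real.exp (-t)) (-Real.exp (-t)) t := by
    simpa using ((Real.hasDerivAt_exp (-t)).comp t ((hasDerivAt_id t).neg)).const_add 1
  have hne : (1 : ℝ) + Real.exp (-t) ≠ 0 := by positivity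
  have h := h1.inv hne
  have heq : -(-Real.exp (-t)) / (1 + Real.exp (-t)) ^ 2
      = sigmoid t * (1 - sigmoid t) := by
    unfold sigmoid; field_simp; ring
  have h2 : sigmoid = fun t : ℝ => (1 + Real.exp (-t))⁻¹ := by
    funext x; unfold sigmoid; rw [one_div]
  rw [h2]
  exact h.congr_deriv (by field_simp; ring)

lemma hasDerivAt_gLoss (ω t : ℝ) :
    HasDerivAt (gLoss ω) (sigmoid t - ω) t := by
  have hp := sig_pos t
  have h1 := sig_lt_one t
  have hlog1 : HasDerivAt (fun a => Real.log (sigmoid a))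
      (sigmoid t * (1 - sigmoid t) / sigmoid t) t :=
    (hasDerivAt_sigmoid t).log (ne_of_gt hp)
  have hs2 : HasDerivAt (fun a => 1 - sigmoid a) (-(sigmoid t * (1 - sigmoid t))) t :=
    ((hasDerivAt_const t (1:ℝ)).sub (hasDerivAt_sigmoid t)).congr_deriv (zero_sub _)
  have hlog2 : HasDerivAt (fun a => Real.log (1 - sigmoid a))
      (-(sigmoid t * (1 - sigmoid t)) / (1 - sigmoid t)) t :=
    hs2.log (by linarith)
  have h := (hlog1.const_mul (-ω)).sub (hlog2.const_mul (1 - ω))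
  have heq : -ω * (sigmoid t * (1 - sigmoid t) / sigmoid t)
      - (1 - ω) * (-(sigmoid t * (1 - sigmoid t)) / (1 - sigmoid t)) = sigmoid t - ω := by
    have h1' : 1 - sigmoid t ≠ 0 := by linarith
    field_simp
    ring
  rw [heq] at h
  exact h

lemma sig_mul_eq (t : ℝ) :
    sigmoid t * (1 - sigmoid t) = Real.exp (-t) / (1 + Real.exp (-t)) ^ 2 := by
  unfold sigmoid
  have : (1 : ℝ) + Real.exp (-t) ≠ 0 := by positivity
  field_simp
  ring

lemma sigmoid_mul_ge {B a : ℝ} (hB : 0 < B) (ha : a ∈ Set.Icc (-(2*B)) (2*B)) :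
    sigmoid a * (1 - sigmoid a) ≥ sigmoid (2*B) * (1 - sigmoid (2*B)) := by
  obtain ⟨ha1, ha2⟩ := ha
  rw [sig_mul_eq, sig_mul_eq, ge_iff_le,
    div_le_div_iff₀ (by positivity) (by positivity)]
  set u := Real.exp (-a) with hu
  set v := Real.exp (-(2*B)) with hv
  have h1 : v ≤ u := Real.exp_le_exp.mpr (by linarith)
  have h2 : u * v ≤ 1 := by
    rw [hu, hv, ← Real.exp_add]
    exact Real.exp_le_one_iff.mpr (by linarith)
  have h3 : 0 < v := Real.exp_pos _
  nlinarith [sq_nonneg (u - v)]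

/-- Strong convexity of the Bernoulli cross-entropy loss on [−2B, 2B]: with
c_B = σ(2B)(1−σ(2B)), for all a, b ∈ [−2B,2B],
g_ω(b) − g_ω(a) ≥ (σ(a)−ω)(b−a) + (c_B/2)(b−a)²; in particular g_ω is c_B-strongly convex on
[−2B, 2B], its derivative is σ(a) − ω, and its second derivative is σ(a)(1−σ(a)) ≥ c_B there. -/
theorem stmt_12 (ω B : ℝ) (hω : ω ∈ Set.Icc (0 : ℝ) 1) (hB : 0 < B) :
    (∀ a ∈ Set.Icc (-(2 * B)) (2 * B), ∀ b ∈ Set.Icc (-(2 * B)) (2 * B),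
      gLoss ω b - gLoss ω a ≥
        (sigmoid a - ω) * (b - a) +
          (sigmoid (2 * B) * (1 - sigmoid (2 * B)) / 2) * (b - a) ^ 2) ∧
    StrongConvexOn (Set.Icc (-(2 * B)) (2 * B))
      (sigmoid (2 * B) * (1 - sigmoid (2 * B))) (gLoss ω) ∧
    (∀ a : ℝ, HasDerivAt (gLoss ω) (sigmoid a - ω) a) ∧
    (∀ a : ℝ, HasDerivAt (fun t => sigmoid t - ω) (sigmoid a * (1 - sigmoid a)) a) ∧
    (∀ a ∈ Set.Icc (-(2 * B)) (2 * B),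
      sigmoid a * (1 - sigmoid a) ≥ sigmoid (2 * B) * (1 - sigmoid (2 * B))) := by
  set c := sigmoid (2 * B) * (1 - sigmoid (2 * B)) with hc
  set D := Set.Icc (-(2 * B)) (2 * B) with hD
  have hDconv : Convex ℝ D := convex_Icc _ _
  -- convexity of the shifted function
  have hdiff : Differentiable ℝ (gLoss ω) := fun x => (hasDerivAt_gLoss ω x).differentiableAt
  have hconv : ConvexOn ℝ D (fun x => gLoss ω x - c / 2 * x ^ 2) := by
    apply convexOn_of_hasDerivWithinAt2_nonneg hDconv
      (f' := fun x => sigmoid x - ω - c * x)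
      (f'' := fun x => sigmoid x * (1 - sigmoid x) - c)
    · exact (hdiff.continuous.sub (by continuity)).continuousOn
    · intro x hx
      exact ((hasDerivAt_gLoss ω x).sub
        (((hasDerivAt_pow 2 x).const_mul (c/2)).congr_deriv (by ring))).hasDerivWithinAt
    · intro x hx
      exact (((hasDerivAt_sigmoid x).sub_const ω).sub
        ((hasDerivAt_id x).const_mul c |>.congr_deriv (by ring))).hasDerivWithinAt
    · intro x hx
      rw [hD, interior_Icc] at hx
      have := sigmoid_mul_ge hB (Set.mem_Icc.mpr ⟨hx.1.le, hx.2.le⟩)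
      linarith
  refine ⟨?_, ?_, fun a => hasDerivAt_gLoss ω a, fun a => (hasDerivAt_sigmoid a).sub_const ω,
    fun a ha => sigmoid_mul_ge hB ha⟩
  · -- tangent inequality
    intro a ha b hb
    have hda : HasDerivAt (fun x => gLoss ω x - c / 2 * x ^ 2) (sigmoid a - ω - c * a) a :=
      (hasDerivAt_gLoss ω a).sub
        (((hasDerivAt_pow 2 a).const_mul (c/2)).congr_deriv (by ring))
    rcases lt_trichotomy a b with hab | hab | hab
    · have h := hconv.le_slope_of_hasDerivAt ha hb hab hda
      rw [slope_def_field] at h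
      rw [ge_iff_le, ← sub_nonneg]
      have h' := (le_div_iff₀ (by linarith : (0:ℝ) < b - a)).mp h
      nlinarith [h']
    · subst hab; simp
    · have h := hconv.slope_le_of_hasDerivAt hb ha hab hda
      rw [slope_def_field] at h
      rw [ge_iff_le, ← sub_nonneg]
      have h' := (div_le_iff₀ (by linarith : (0:ℝ) < a - b)).mp h
      nlinarith [h']
  · refine strongConvexOn_iff_convex.mpr ?_
    convert hconv using 2 with x
    · rfl
    · rfl
    rw [Real.norm_eq_abs, sq_abs]
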